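/- If S = {x_1, ..., x_{2(n+1)}} is a maximum obtuse almost-equiangular subset of S^{n-1}, then S is a spherical 2-design: the sum of the x_i is zero, and for every unit vector u, ∑_{k} (u·x_k)² = 2(1 + 1/n). -/

import Mathlib

open scoped RealInnerProductSpace

private lemma euclid_inner_eq {d : ℕ} (a b : EuclideanSpace ℝ (Fin d)) :
    ⟪a, b⟫ = ∑ i, a i * b i := by
  simp [PiLp.inner_apply, RCLike.inner_apply, conj_trivial]
  exact Finset.sum_congr rfl (fun _ _ => mul_comm _ _)

private lemma swap4 {d m : ℕ} (f : Fin d → Fin d → Fin m → Fin m → ℝ) :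
    ∑ i, ∑ j, ∑ k, ∑ l, f i j k l = ∑ k, ∑ l, ∑ i, ∑ j, f i j k l := by
  calc ∑ i, ∑ j, ∑ k, ∑ l, f i j k l
      = ∑ i, ∑ k, ∑ j, ∑ l, f i j k l :=
        Finset.sum_congr rfl (fun i _ => Finset.sum_comm)
    _ = ∑ k, ∑ i, ∑ j, ∑ l, f i j k l := Finset.sum_comm
    _ = ∑ k, ∑ i, ∑ l, ∑ j, f i j k l :=
        Finset.sum_congr rfl (fun k _ =>
          Finset.sum_congr rfl (fun i _ => Finset.sum_comm))
    _ = ∑ k, ∑ l, ∑ i, ∑ j, f i j k l :=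
        Finset.sum_congr rfl (fun k _ => Finset.sum_comm)

set_option maxHeartbeats 1000000 in
theorem max_obtuse_almost_equiangular_two_design (n : ℕ)
    (x : Fin (2 * (n + 1)) → EuclideanSpace ℝ (Fin n))
    (hinj : Function.Injective x)
    (hunit : ∀ i, ‖x i‖ = 1)
    (halmost : ∀ i j k : Fin (2 * (n + 1)), i ≠ j → i ≠ k → j ≠ k →
      ⟪x i, x j⟫ = -1 / n ∨ ⟪x i, x k⟫ = -1 / n ∨ ⟪x j, x k⟫ = -1 / n) :
    (∑ i, x i = 0) ∧
      ∀ u : EuclideanSpace ℝ (Fin n), ‖u‖ = 1 →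
        ∑ k, ⟪u, x k⟫ ^ 2 = 2 * (1 + 1 / n) := by
  classical
  -- the case n = 0 is vacuous
  rcases Nat.eq_zero_or_pos n with hn0 | hn
  · exfalso
    subst hn0
    have h := hunit 0
    rw [EuclideanSpace.norm_eq] at h
    simp at h
  have hnR : (0:ℝ) < n := by exact_mod_cast hn
  -- lift the x's to ℝ^{n+1} by appending the coordinate t = √(1/n)
  set t : ℝ := Real.sqrt (1 / n) with ht_def
  have ht2 : t * t = 1 / n := Real.mul_self_sqrt (by positivity)
  have htpos : 0 < t := Real.sqrt_pos.mpr (by positivity)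
  set y : Fin (2 * (n + 1)) → EuclideanSpace ℝ (Fin (n + 1)) :=
    fun k => WithLp.toLp 2 (Fin.snoc (x k) t : Fin (n + 1) → ℝ) with hy_def
  have hy_cast : ∀ k (i : Fin n), y k (Fin.castSucc i) = x k i := by
    intro k i; rw [hy_def]; exact Fin.snoc_castSucc (α := fun _ => ℝ) t (x k).ofLp i
  have hy_last : ∀ k, y k (Fin.last n) = t := by
    intro k; rw [hy_def]; exact Fin.snoc_last (α := fun _ => ℝ) t (x k).ofLp
  have hyy : ∀ k l, ⟪y k, y l⟫ = ⟪x k, x l⟫ + 1 / n := by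
    intro k l
    rw [euclid_inner_eq, euclid_inner_eq, Fin.sum_univ_castSucc]
    rw [hy_last, hy_last, ht2]
    congr 1
    exact Finset.sum_congr rfl (fun i _ => by rw [hy_cast, hy_cast])
  set r2 : ℝ := 1 + 1 / n with hr2_def
  have hr2pos : 0 < r2 := by positivity
  have hyk2 : ∀ k, ⟪y k, y k⟫ = r2 := by
    intro k
    rw [hyy, real_inner_self_eq_norm_sq, hunit, hr2_def]; norm_num
  -- the non-orthogonality graph of the y's is triangle-free
  have horth : ∀ k l l' : Fin (2 * (n + 1)), k ≠ l → k ≠ l' → l ≠ l' →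
      ⟪y k, y l⟫ ≠ 0 → ⟪y k, y l'⟫ ≠ 0 → ⟪y l, y l'⟫ = 0 := by
    intro k l l' hkl hkl' hll' h1 h2
    rcases halmost k l l' hkl hkl' hll' with h | h | h
    · exact absurd (by rw [hyy, h]; ring) h1
    · exact absurd (by rw [hyy, h]; ring) h2
    · rw [hyy, h]; ring
  -- Bessel inequality for each row
  have hrow : ∀ k, ∑ l ∈ Finset.univ.erase k, ⟪y k, y l⟫ ^ 2 ≤ r2 ^ 2 := by
    intro k
    set S : Finset (Fin (2 * (n + 1))) :=
      (Finset.univ.erase k).filter (fun l => ⟪y k, y l⟫ ≠ 0) with hS_def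
    have hsub : ∑ l ∈ Finset.univ.erase k, ⟪y k, y l⟫ ^ 2
        = ∑ l ∈ S, ⟪y k, y l⟫ ^ 2 := by
      rw [hS_def]
      refine (Finset.sum_filter_of_ne ?_).symm
      intro l _ hne h0
      exact hne (by rw [h0]; ring)
    have hmemS : ∀ a : Fin (2 * (n + 1)), a ∈ S → a ≠ k ∧ ⟪y k, y a⟫ ≠ 0 := by
      intro a ha
      rw [hS_def, Finset.mem_filter, Finset.mem_erase] at ha
      exact ⟨ha.1.1, ha.2⟩
    set r : ℝ := Real.sqrt r2 with hr_def
    have hrpos : 0 < r := Real.sqrt_pos.mpr hr2pos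
    have hrr : r * r = r2 := Real.mul_self_sqrt hr2pos.le
    set v : {a // a ∈ S} → EuclideanSpace ℝ (Fin (n + 1)) :=
      fun a => (r⁻¹ : ℝ) • y a with hv_def
    have hv : Orthonormal ℝ v := by
      rw [orthonormal_iff_ite]
      intro a b
      rw [hv_def]
      simp only
      rw [real_inner_smul_left, real_inner_smul_right]
      by_cases hab : a = b
      · subst hab
        rw [hyk2, if_pos rfl, ← hrr]
        field_simp
      · have hab' : (a : Fin (2 * (n + 1))) ≠ (b : Fin (2 * (n + 1))) :=
          fun h => hab (Subtype.ext h)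
        have h0 : ⟪y a, y b⟫ = 0 :=
          horth k a b (fun h => (hmemS a a.2).1 h.symm)
            (fun h => (hmemS b b.2).1 h.symm) hab'
            (hmemS a a.2).2 (hmemS b b.2).2
        rw [h0, if_neg hab]; ring
    have hb := hv.sum_inner_products_le (s := Finset.univ) (y k)
    have hterm : ∀ a : {a // a ∈ S},
        ‖⟪v a, y k⟫‖ ^ 2 = r2⁻¹ * ⟪y k, y (a : Fin (2 * (n + 1)))⟫ ^ 2 := by
      intro a
      rw [hv_def]
      simp only
      rw [real_inner_smul_left, norm_mul, mul_pow, Real.norm_eq_abs,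
        Real.norm_eq_abs, sq_abs, sq_abs, real_inner_comm]
      congr 1
      rw [← hrr, sq, mul_inv]
    have hyk_norm : ‖y k‖ ^ 2 = r2 := by rw [← real_inner_self_eq_norm_sq, hyk2]
    rw [Finset.sum_congr rfl (fun a _ => hterm a), ← Finset.mul_sum, hyk_norm]
      at hb
    have hsum' : ∑ a : {a // a ∈ S}, ⟪y k, y (a : Fin (2 * (n + 1)))⟫ ^ 2
        = ∑ l ∈ S, ⟪y k, y l⟫ ^ 2 := Finset.sum_coe_sort S (fun l => ⟪y k, y l⟫ ^ 2)
    rw [hsum'] at hb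
    rw [hsub]
    calc ∑ l ∈ S, ⟪y k, y l⟫ ^ 2 = r2 * (r2⁻¹ * ∑ l ∈ S, ⟪y k, y l⟫ ^ 2) := by
          field_simp
      _ ≤ r2 * r2 := by
          exact mul_le_mul_of_nonneg_left hb hr2pos.le
      _ = r2 ^ 2 := by ring
  -- total bound on the Frobenius-type sum
  have hP : ∑ k, ∑ l, ⟪y k, y l⟫ ^ 2 ≤ (2 * ((n : ℝ) + 1)) * (2 * r2 ^ 2) := by
    have hbound : ∀ k : Fin (2 * (n + 1)), ∑ l, ⟪y k, y l⟫ ^ 2 ≤ 2 * r2 ^ 2 := by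
      intro k
      rw [← Finset.add_sum_erase Finset.univ _ (Finset.mem_univ k), hyk2]
      have := hrow k
      nlinarith [hrow k]
    calc ∑ k, ∑ l, ⟪y k, y l⟫ ^ 2 ≤ ∑ _k : Fin (2 * (n + 1)), 2 * r2 ^ 2 :=
          Finset.sum_le_sum (fun k _ => hbound k)
      _ = (2 * ((n : ℝ) + 1)) * (2 * r2 ^ 2) := by
          rw [Finset.sum_const, Finset.card_univ, Fintype.card_fin, nsmul_eq_mul]
          push_cast; ring
  -- the frame matrix
  set Φ : Fin (n + 1) → Fin (n + 1) → ℝ := fun i j => ∑ k, y k i * y k j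
    with hΦ_def
  have htr : ∑ i, Φ i i = (2 * ((n : ℝ) + 1)) * r2 := by
    rw [hΦ_def]
    simp only
    rw [Finset.sum_comm]
    have : ∀ k : Fin (2 * (n + 1)), ∑ i, y k i * y k i = r2 := by
      intro k; rw [← euclid_inner_eq, hyk2]
    rw [Finset.sum_congr rfl (fun k _ => this k), Finset.sum_const,
      Finset.card_univ, Fintype.card_fin, nsmul_eq_mul]
    push_cast; ring
  have hfrob : ∑ i, ∑ j, Φ i j ^ 2 = ∑ k, ∑ l, ⟪y k, y l⟫ ^ 2 := by
    have e2 : ∀ i j, Φ i j ^ 2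
        = ∑ k, ∑ l, (y k i * y l i) * (y k j * y l j) := by
      intro i j
      rw [hΦ_def]
      simp only
      rw [sq, Finset.sum_mul_sum]
      exact Finset.sum_congr rfl (fun k _ =>
        Finset.sum_congr rfl (fun l _ => by ring))
    have e1 : ∀ k l, ⟪y k, y l⟫ ^ 2
        = ∑ i, ∑ j, (y k i * y l i) * (y k j * y l j) := by
      intro k l
      rw [euclid_inner_eq, sq, Finset.sum_mul_sum]
    calc ∑ i, ∑ j, Φ i j ^ 2
        = ∑ i, ∑ j, ∑ k, ∑ l, (y k i * y l i) * (y k j * y l j) :=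
          Finset.sum_congr rfl (fun i _ =>
            Finset.sum_congr rfl (fun j _ => e2 i j))
      _ = ∑ k, ∑ l, ∑ i, ∑ j, (y k i * y l i) * (y k j * y l j) :=
          swap4 (fun i j k l => (y k i * y l i) * (y k j * y l j))
      _ = ∑ k, ∑ l, ⟪y k, y l⟫ ^ 2 :=
          Finset.sum_congr rfl (fun k _ =>
            Finset.sum_congr rfl (fun l _ => (e1 k l).symm))
  -- the sum-of-squares identity forces Φ = 2 r2 I
  set D : Fin (n + 1) → Fin (n + 1) → ℝ :=
    fun i j => if i = j then 2 * r2 else 0 with hD_def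
  have hite1 : ∀ i, ∑ j, Φ i j * D i j = Φ i i * (2 * r2) := by
    intro i
    rw [hD_def]
    simp only [mul_ite, mul_zero]
    rw [Finset.sum_ite_eq, if_pos (Finset.mem_univ i)]
  have hite2 : ∀ i, ∑ j, D i j ^ 2 = (2 * r2) ^ 2 := by
    intro i
    have hj : ∀ j, D i j ^ 2 = if i = j then (2 * r2) ^ 2 else 0 := by
      intro j; rw [hD_def]; by_cases h : i = j <;> simp [h]
    rw [Finset.sum_congr rfl fun j _ => hj j, Finset.sum_ite_eq,
      if_pos (Finset.mem_univ i)]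
  have hQ0 : ∑ i, ∑ j, (Φ i j - D i j) ^ 2
      = (∑ i, ∑ j, Φ i j ^ 2) - 4 * r2 * (∑ i, Φ i i)
        + ((n : ℝ) + 1) * (4 * r2 ^ 2) := by
    have per : ∀ i, ∑ j, (Φ i j - D i j) ^ 2
        = (∑ j, Φ i j ^ 2) - 4 * r2 * Φ i i + 4 * r2 ^ 2 := by
      intro i
      calc ∑ j, (Φ i j - D i j) ^ 2
          = ∑ j, (Φ i j ^ 2 - 2 * (Φ i j * D i j) + D i j ^ 2) :=
            Finset.sum_congr rfl (fun j _ => by ring)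
        _ = (∑ j, Φ i j ^ 2) - 2 * ∑ j, Φ i j * D i j + ∑ j, D i j ^ 2 := by
            rw [Finset.sum_add_distrib, Finset.sum_sub_distrib, Finset.mul_sum]
        _ = (∑ j, Φ i j ^ 2) - 4 * r2 * Φ i i + 4 * r2 ^ 2 := by
            rw [hite1 i, hite2 i]; ring
    rw [Finset.sum_congr rfl (fun i _ => per i), Finset.sum_add_distrib,
      Finset.sum_sub_distrib, Finset.mul_sum, Finset.sum_const,
      Finset.card_univ, Fintype.card_fin, nsmul_eq_mul]
    push_cast; ring
  have hQle : ∑ i, ∑ j, (Φ i j - D i j) ^ 2 ≤ 0 := by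
    rw [hQ0, htr, hfrob]
    linarith [hP]
  have hQ0' : ∑ i, ∑ j, (Φ i j - D i j) ^ 2 = 0 :=
    le_antisymm hQle (Finset.sum_nonneg fun i _ =>
      Finset.sum_nonneg fun j _ => sq_nonneg _)
  have hDD : ∀ i j, Φ i j = D i j := by
    intro i j
    have h1 := (Finset.sum_eq_zero_iff_of_nonneg
      (fun i (_ : i ∈ Finset.univ) => Finset.sum_nonneg
        (fun j _ => sq_nonneg (Φ i j - D i j)))).mp hQ0' i (Finset.mem_univ i)
    have h2 := (Finset.sum_eq_zero_iff_of_nonneg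
      (fun j (_ : j ∈ Finset.univ) => sq_nonneg (Φ i j - D i j))).mp h1 j
      (Finset.mem_univ j)
    have := pow_eq_zero_iff (n := 2) (by norm_num) |>.mp h2
    linarith
  -- first conclusion: the sum of the x's vanishes
  have hcol : ∀ i : Fin n, ∑ k, x k i = 0 := by
    intro i
    have h := hDD (Fin.castSucc i) (Fin.last n)
    rw [hD_def] at h
    simp only at h
    rw [if_neg (Fin.castSucc_lt_last i).ne] at h
    rw [hΦ_def] at h
    simp only at h
    have h' : ∑ k, x k i * t = 0 := by
      rw [← h]
      exact Finset.sum_congr rfl (fun k _ => by rw [hy_cast, hy_last])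
    rw [← Finset.sum_mul] at h'
    rcases mul_eq_zero.mp h' with h'' | h''
    · exact h''
    · exact absurd h'' htpos.ne'
  have goal1 : ∑ k, x k = 0 := by
    apply PiLp.ext
    intro i
    rw [WithLp.ofLp_sum, Finset.sum_apply, WithLp.ofLp_zero]
    exact hcol i
  refine ⟨goal1, ?_⟩
  -- second conclusion: the 2-design property
  intro u hu
  have hu2 : ∑ i, u i * u i = 1 := by
    rw [← euclid_inner_eq, real_inner_self_eq_norm_sq, hu]; norm_num
  have hswap3 : ∀ (f : Fin (2 * (n + 1)) → Fin n → Fin n → ℝ),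
      ∑ k, ∑ i, ∑ j, f k i j = ∑ i, ∑ j, ∑ k, f k i j := by
    intro f
    calc ∑ k, ∑ i, ∑ j, f k i j = ∑ i, ∑ k, ∑ j, f k i j := Finset.sum_comm
      _ = ∑ i, ∑ j, ∑ k, f k i j :=
          Finset.sum_congr rfl (fun i _ => Finset.sum_comm)
  calc ∑ k, ⟪u, x k⟫ ^ 2
      = ∑ k, ∑ i, ∑ j, (u i * x k i) * (u j * x k j) := by
        refine Finset.sum_congr rfl (fun k _ => ?_)
        rw [euclid_inner_eq, sq, Finset.sum_mul_sum]
    _ = ∑ i, ∑ j, ∑ k, (u i * x k i) * (u j * x k j) := hswap3 _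
    _ = ∑ i, ∑ j, u i * u j * Φ (Fin.castSucc i) (Fin.castSucc j) := by
        refine Finset.sum_congr rfl (fun i _ => Finset.sum_congr rfl
          (fun j _ => ?_))
        rw [hΦ_def]
        simp only
        rw [Finset.mul_sum]
        refine Finset.sum_congr rfl (fun k _ => ?_)
        rw [hy_cast, hy_cast]; ring
    _ = ∑ i, ∑ j, u i * u j * (if i = j then 2 * r2 else 0) := by
        refine Finset.sum_congr rfl (fun i _ => Finset.sum_congr rfl
          (fun j _ => ?_))
        rw [hDD, hD_def]
        simp only [Fin.castSucc_inj]
    _ = ∑ i, u i * u i * (2 * r2) := by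
        refine Finset.sum_congr rfl (fun i _ => ?_)
        simp only [mul_ite, mul_zero]
        rw [Finset.sum_ite_eq, if_pos (Finset.mem_univ i)]
    _ = 2 * (1 + 1 / n) := by
        rw [← Finset.sum_mul, hu2, hr2_def]; ring
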